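/- Let r, r' be natural numbers. The commutative ring R = ℤ[h,ξ]/(h^{r+1}, ξ·(ξ−h)^{r'+1}) is a free ℤ-module of rank (r+1)(r'+2), and the images of the (r+1)(r'+2) elements h^i·(ξ−h)^j for 0 ≤ i ≤ r and 0 ≤ j ≤ r'+1 form a ℤ-basis of R. -/

import Mathlib

open MvPolynomial

/-- The ideal `(h^(r+1), ξ·(ξ−h)^(r'+1))` in `ℤ[h,ξ]`, with `h = X 0`, `ξ = X 1`. -/
noncomputable def flipIdeal (r r' : ℕ) : Ideal (MvPolynomial (Fin 2) ℤ) :=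
  Ideal.span {(X 0 : MvPolynomial (Fin 2) ℤ) ^ (r + 1),
              (X 1 : MvPolynomial (Fin 2) ℤ) * ((X 1 : MvPolynomial (Fin 2) ℤ) - X 0) ^ (r' + 1)}

/-- The ring `R = ℤ[h,ξ]/(h^(r+1), ξ·(ξ−h)^(r'+1))`. -/
abbrev FlipRing (r r' : ℕ) : Type :=
  MvPolynomial (Fin 2) ℤ ⧸ flipIdeal r r'

/-- The image of `h` in `R`. -/
noncomputable def hcl (r r' : ℕ) : FlipRing r r' :=
  Ideal.Quotient.mk (flipIdeal r r') (X 0)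

/-- The image of `ξ` in `R`. -/
noncomputable def xcl (r r' : ℕ) : FlipRing r r' :=
  Ideal.Quotient.mk (flipIdeal r r') (X 1)

/-! ### Auxiliary constructions -/

namespace FlipAux

/-- The polynomial `X^(r+1)` over `ℤ`. -/
noncomputable def pA (r : ℕ) : Polynomial ℤ := Polynomial.X ^ (r + 1)

lemma pA_monic (r : ℕ) : (pA r).Monic := Polynomial.monic_X_pow _

/-- `A = ℤ[u]/(u^(r+1))`. -/
abbrev RA (r : ℕ) := AdjoinRoot (pA r)

/-- The polynomial `v^(r'+2) + u·v^(r'+1)` over `A`. -/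
noncomputable def qB (r r' : ℕ) : Polynomial (RA r) :=
  Polynomial.X ^ (r' + 2) + Polynomial.C (AdjoinRoot.root (pA r)) * Polynomial.X ^ (r' + 1)

lemma qB_monic (r r' : ℕ) : (qB r r').Monic := by
  refine Polynomial.monic_X_pow_add ?_
  refine (Polynomial.degree_C_mul_X_pow_le _ _).trans_lt ?_
  exact_mod_cast Nat.lt_succ_self (r' + 1)

lemma RA_nontrivial (r : ℕ) : Nontrivial (RA r) :=
  AdjoinRoot.nontrivial (pA r)
    (by rw [pA, Polynomial.degree_X_pow]; exact_mod_cast Nat.succ_ne_zero r)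

lemma qB_natDegree (r r' : ℕ) : (qB r r').natDegree = r' + 2 := by
  haveI := RA_nontrivial r
  have hdeg : (qB r r').degree = (r' + 2 : ℕ) := by
    rw [qB, Polynomial.degree_add_eq_left_of_degree_lt, Polynomial.degree_X_pow]
    rw [Polynomial.degree_X_pow]
    refine (Polynomial.degree_C_mul_X_pow_le _ _).trans_lt ?_
    exact_mod_cast Nat.lt_succ_self (r' + 1)
  exact Polynomial.natDegree_eq_of_degree_eq_some hdeg

/-- `B = A[v]/(v^(r'+2)+u·v^(r'+1))`. -/
abbrev RB (r r' : ℕ) := AdjoinRoot (qB r r')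

lemma hcl_pow (r r' : ℕ) : hcl r r' ^ (r + 1) = 0 := by
  rw [hcl, ← map_pow, Ideal.Quotient.eq_zero_iff_mem]
  exact Ideal.subset_span (by left; rfl)

lemma xcl_rel (r r' : ℕ) : xcl r r' * (xcl r r' - hcl r r') ^ (r' + 1) = 0 := by
  rw [xcl, hcl, ← map_sub, ← map_pow, ← map_mul, Ideal.Quotient.eq_zero_iff_mem]
  exact Ideal.subset_span (by right; rfl)

/-- The map `A → R`, `u ↦ h`. -/
noncomputable def ψ₁ (r r' : ℕ) : RA r →+* FlipRing r r' :=
  AdjoinRoot.lift (Int.castRingHom _) (hcl r r')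
    (by simp [pA, hcl_pow r r'])

lemma ψ₁_root (r r' : ℕ) : ψ₁ r r' (AdjoinRoot.root (pA r)) = hcl r r' :=
  AdjoinRoot.lift_root _

/-- The map `B → R`, `v ↦ ξ − h`. -/
noncomputable def ψ (r r' : ℕ) : RB r r' →+* FlipRing r r' :=
  AdjoinRoot.lift (ψ₁ r r') (xcl r r' - hcl r r')
    (by
      simp only [qB, Polynomial.eval₂_add, Polynomial.eval₂_mul, Polynomial.eval₂_pow,
        Polynomial.eval₂_X, Polynomial.eval₂_C, ψ₁_root]
      linear_combination xcl_rel r r')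

lemma ψ_root (r r' : ℕ) : ψ r r' (AdjoinRoot.root (qB r r')) = xcl r r' - hcl r r' :=
  AdjoinRoot.lift_root _

lemma ψ_of (r r' : ℕ) (a : RA r) : ψ r r' (AdjoinRoot.of (qB r r') a) = ψ₁ r r' a :=
  AdjoinRoot.lift_of _

lemma ψ_cB (r r' : ℕ) :
    ψ r r' (algebraMap (RA r) (AdjoinRoot (qB r r')) (AdjoinRoot.root (pA r))) = hcl r r' := by
  rw [AdjoinRoot.algebraMap_eq, ψ_of, ψ₁_root]

/-- Image of `u` in `B`. -/
noncomputable def cB (r r' : ℕ) : RB r r' :=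
  algebraMap (RA r) (RB r r') (AdjoinRoot.root (pA r))

/-- Image of `v` in `B`. -/
noncomputable def vB (r r' : ℕ) : RB r r' := AdjoinRoot.root (qB r r')

lemma rootA_pow (r : ℕ) : AdjoinRoot.root (pA r) ^ (r + 1) = 0 := by
  rw [← AdjoinRoot.mk_X, ← map_pow]
  exact AdjoinRoot.mk_self

lemma cB_pow (r r' : ℕ) : cB r r' ^ (r + 1) = 0 := by
  rw [cB, ← map_pow, rootA_pow, map_zero]

lemma vB_rel (r r' : ℕ) : vB r r' ^ (r' + 2) + cB r r' * vB r r' ^ (r' + 1) = 0 := by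
  rw [vB, cB, AdjoinRoot.algebraMap_eq, ← AdjoinRoot.mk_X, ← AdjoinRoot.mk_C, ← map_pow, ← map_pow,
    ← map_mul, ← map_add]
  exact AdjoinRoot.mk_self

/-- The map `ℤ[h,ξ] → B`, `h ↦ u`, `ξ ↦ v + u`. -/
noncomputable def φ₀ (r r' : ℕ) : MvPolynomial (Fin 2) ℤ →+* RB r r' :=
  (MvPolynomial.aeval (fun i : Fin 2 => if i = 0 then cB r r' else vB r r' + cB r r')).toRingHom

lemma φ₀_X0 (r r' : ℕ) : φ₀ r r' (X 0) = cB r r' := by simp [φ₀]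

lemma φ₀_X1 (r r' : ℕ) : φ₀ r r' (X 1) = vB r r' + cB r r' := by
  simp [φ₀]

lemma flipIdeal_le_ker (r r' : ℕ) : flipIdeal r r' ≤ RingHom.ker (φ₀ r r') := by
  rw [flipIdeal, Ideal.span_le]
  rintro x (rfl | rfl)
  · simp only [SetLike.mem_coe, RingHom.mem_ker, map_pow, φ₀_X0, cB_pow]
  · simp only [SetLike.mem_coe, RingHom.mem_ker, map_mul, map_pow, map_sub, φ₀_X0, φ₀_X1,
      add_sub_cancel_right]
    linear_combination vB_rel r r'

/-- The induced map `R → B`. -/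
noncomputable def φ (r r' : ℕ) : FlipRing r r' →+* RB r r' :=
  Ideal.Quotient.lift (flipIdeal r r') (φ₀ r r') (fun _ ha => RingHom.mem_ker.mp (flipIdeal_le_ker r r' ha))

lemma φ_hcl (r r' : ℕ) : φ r r' (hcl r r') = cB r r' := by
  rw [hcl, φ, Ideal.Quotient.lift_mk, φ₀_X0]

lemma φ_xcl (r r' : ℕ) : φ r r' (xcl r r') = vB r r' + cB r r' := by
  rw [xcl, φ, Ideal.Quotient.lift_mk, φ₀_X1]

/-- Extensionality for ring homs out of `AdjoinRoot`. -/
theorem adjoinRoot_ringHom_ext {R S : Type*} [CommRing R] [CommRing S] (f : Polynomial R)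
    {g h : AdjoinRoot f →+* S} (h1 : g.comp (AdjoinRoot.of f) = h.comp (AdjoinRoot.of f))
    (h2 : g (AdjoinRoot.root f) = h (AdjoinRoot.root f)) : g = h := by
  have key : g.comp (AdjoinRoot.mk f) = h.comp (AdjoinRoot.mk f) := by
    refine Polynomial.ringHom_ext' ?_ ?_
    · exact h1
    · exact h2
  refine RingHom.ext fun x => ?_
  exact AdjoinRoot.induction_on f x fun p => RingHom.congr_fun key p

lemma ψ_comp_φ (r r' : ℕ) : (ψ r r').comp (φ r r') = RingHom.id (FlipRing r r') := by
  refine Ideal.Quotient.ringHom_ext ?_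
  refine MvPolynomial.ringHom_ext (fun z => ?_) (fun i => ?_)
  · simp only [RingHom.comp_apply]
    rw [show (C (z : ℤ) : MvPolynomial (Fin 2) ℤ) = (z : MvPolynomial (Fin 2) ℤ) by
      simp, map_intCast, map_intCast, map_intCast]
    rfl
  · fin_cases i
    · show ψ r r' (φ r r' (hcl r r')) = hcl r r'
      rw [φ_hcl, cB, ψ_cB]
    · show ψ r r' (φ r r' (xcl r r')) = xcl r r'
      rw [φ_xcl, map_add, vB, ψ_root, cB, ψ_cB, sub_add_cancel]

lemma φ_comp_ψ (r r' : ℕ) : (φ r r').comp (ψ r r') = RingHom.id (RB r r') := by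
  refine adjoinRoot_ringHom_ext (qB r r') ?_ ?_
  · refine adjoinRoot_ringHom_ext (pA r) (Subsingleton.elim _ _) ?_
    simp only [RingHom.comp_apply, RingHom.id_apply]
    have hc : AdjoinRoot.of (qB r r') (AdjoinRoot.root (pA r)) = cB r r' := by
      rw [cB, AdjoinRoot.algebraMap_eq]
    rw [hc, show ψ r r' (cB r r') = hcl r r' from ψ_cB r r', φ_hcl]
  · simp only [RingHom.comp_apply, ψ_root, map_sub, φ_xcl, φ_hcl, RingHom.id_apply]
    rw [add_sub_cancel_right, vB]

/-- The ring isomorphism `R ≃ B`. -/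
noncomputable def e (r r' : ℕ) : FlipRing r r' ≃+* RB r r' :=
  RingEquiv.ofRingHom (φ r r') (ψ r r') (φ_comp_ψ r r') (ψ_comp_φ r r')

end FlipAux

open FlipAux in
/-- `R = ℤ[h,ξ]/(h^(r+1), ξ·(ξ−h)^(r'+1))` is a free `ℤ`-module of rank
`(r+1)(r'+2)`, with `ℤ`-basis the images of `h^i·(ξ−h)^j` for `0 ≤ i ≤ r`, `0 ≤ j ≤ r'+1`. -/
theorem flipRing_free_with_canonical_basis (r r' : ℕ) :
    Module.Free ℤ (FlipRing r r') ∧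
    Module.finrank ℤ (FlipRing r r') = (r + 1) * (r' + 2) ∧
    ∃ b : Module.Basis (Fin (r + 1) × Fin (r' + 2)) ℤ (FlipRing r r'),
      ∀ (i : Fin (r + 1)) (j : Fin (r' + 2)),
        b (i, j) = hcl r r' ^ (i : ℕ) * (xcl r r' - hcl r r') ^ (j : ℕ) := by
  classical
  haveI := RA_nontrivial r
  have hd1 : (pA r).natDegree = r + 1 := by
    rw [pA, Polynomial.natDegree_X_pow]
  have hd2 : (qB r r').natDegree = r' + 2 := qB_natDegree r r'
  set pbA := AdjoinRoot.powerBasis' (pA_monic r) with hpbA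
  set pbB := AdjoinRoot.powerBasis' (qB_monic r r') with hpbB
  set bT : Module.Basis (Fin (pA r).natDegree × Fin (qB r r').natDegree) ℤ (RB r r') :=
    pbA.basis.smulTower pbB.basis with hbT
  set eIdx : Fin (pA r).natDegree × Fin (qB r r').natDegree ≃
      Fin (r + 1) × Fin (r' + 2) :=
    Equiv.prodCongr (finCongr hd1) (finCongr hd2) with heIdx
  set eLin : RB r r' ≃ₗ[ℤ] FlipRing r r' :=
    (e r r').symm.toAddEquiv.toIntLinearEquiv with heLin
  set b : Module.Basis (Fin (r + 1) × Fin (r' + 2)) ℤ (FlipRing r r') :=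
    (bT.map eLin).reindex eIdx with hb'
  have hb : ∀ (i : Fin (r + 1)) (j : Fin (r' + 2)),
      b (i, j) = hcl r r' ^ (i : ℕ) * (xcl r r' - hcl r r') ^ (j : ℕ) := by
    intro i j
    have hstep : b (i, j) = eLin (bT (eIdx.symm (i, j))) := by
      rw [hb', Module.Basis.reindex_apply, Module.Basis.map_apply]
    rw [hstep]
    have hTij : bT (eIdx.symm (i, j)) =
        algebraMap (RA r) (RB r r') (AdjoinRoot.root (pA r) ^ (i : ℕ)) *
          AdjoinRoot.root (qB r r') ^ (j : ℕ) := by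
      rw [show eIdx.symm (i, j) =
        (finCongr hd1.symm i, finCongr hd2.symm j) from rfl, hbT]
      have hsa := Module.Basis.smulTower_apply pbA.basis pbB.basis
        (finCongr hd1.symm i, finCongr hd2.symm j)
      refine hsa.trans ?_
      rw [Algebra.smul_def]
      congr 1
      · congr 1
        rw [pbA.basis_eq_pow]
        simp [hpbA]
      · rw [pbB.basis_eq_pow]
        simp [hpbB]
    rw [hTij]
    have hcoe : ∀ x, eLin x = ψ r r' x := fun x => rfl
    simp only [hcoe, map_mul, map_pow, ψ_root, ψ_cB]
  refine ⟨Module.Free.of_basis b, ?_, ⟨b, hb⟩⟩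
  rw [Module.finrank_eq_card_basis b]
  simp
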